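/- Let ψ_k : ℝ^d → ℝ (k = 1,…,n_g) be continuously differentiable, M a symmetric invertible n_g × n_g real matrix, P, Q ∈ (ℝ^d)^{n_p}, and let m ∈ (ℝ^d)^{n_g} satisfy Σ_l M_{kl} m_l = Σ_β P_β ψ_k(Q_β) for all k. For grid tuples u, w ∈ (ℝ^d)^{n_g} define the particle bracket (ad_u w)_β = Σ_{k,l} ψ_k(Q_β) [ (u_k·∇ψ_l(Q_β)) w_l − (w_k·∇ψ_l(Q_β)) u_l ] ∈ ℝ^d, and define ad*_u m ∈ (ℝ^d)^{n_g} by (ad*_u m)_k = Σ_n (M^{-1})_{kn} [ Σ_{l,β} ∇ψ_l(Q_β) (P_β·u_l) ψ_n(Q_β) − Σ_β P_β ( ∇ψ_n(Q_β) · Σ_m u_m ψ_m(Q_β) ) ]. Then the duality relation Σ_{k,l} (ad*_u m)_k · M_{kl} w_l = − Σ_β P_β · (ad_u w)_β holds for every w; equivalently ⟨ad*_u m, w⟩_g = ⟨P, [ad_w u]^P⟩_p, where ⟨·,·⟩_g is the M-weighted grid pairing and ⟨·,·⟩_p is the Euclidean particle pairing. -/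
import Mathlib


/-- Gradient of a scalar function on `ℝ^d`, as the vector of partial derivatives. -/
noncomputable def grad {d : ℕ} (f : (Fin d → ℝ) → ℝ) (x : Fin d → ℝ) : Fin d → ℝ :=
  fun i => fderiv ℝ f x (Pi.single i 1)

/-- Euclidean dot product on `ℝ^d`. -/
noncomputable def dot {d : ℕ} (x y : Fin d → ℝ) : ℝ := ∑ i, x i * y i

lemma dot_comm {d : ℕ} (x y : Fin d → ℝ) : dot x y = dot y x := by
  simp [dot, mul_comm]

lemma dot_smul_left {d : ℕ} (c : ℝ) (x y : Fin d → ℝ) : dot (c • x) y = c * dot x y := by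
  simp [dot, Finset.mul_sum, mul_assoc]

lemma dot_sum_left {d n : ℕ} (f : Fin n → Fin d → ℝ) (y : Fin d → ℝ) :
    dot (∑ i, f i) y = ∑ i, dot (f i) y := by
  simp only [dot, Finset.sum_apply, Finset.sum_mul]
  exact Finset.sum_comm

lemma dot_sub_left {d : ℕ} (x x' y : Fin d → ℝ) : dot (x - x') y = dot x y - dot x' y := by
  simp [dot, sub_mul, Finset.sum_sub_distrib]

lemma dot_smul_right {d : ℕ} (c : ℝ) (x y : Fin d → ℝ) : dot x (c • y) = c * dot x y := by
  simp only [dot, Pi.smul_apply, smul_eq_mul, Finset.mul_sum]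
  exact Finset.sum_congr rfl fun i _ => by ring

lemma dot_sum_right {d n : ℕ} (x : Fin d → ℝ) (f : Fin n → Fin d → ℝ) :
    dot x (∑ i, f i) = ∑ i, dot x (f i) := by
  rw [dot_comm, dot_sum_left]; simp [dot_comm]

lemma dot_sub_right {d : ℕ} (x y y' : Fin d → ℝ) : dot x (y - y') = dot x y - dot x y' := by
  rw [dot_comm, dot_sub_left, dot_comm x y, dot_comm x y']

/-- With grid momentum `m` defined by `Σ_l M_{kl} m_l = Σ_β P_β ψ_k(Q_β)`,
the particle bracket `(ad_u w)_β` and the grid coadjoint operation `ad*_u m` satisfy the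
duality relation `Σ_{k,l} (ad*_u m)_k · M_{kl} w_l = − Σ_β P_β · (ad_u w)_β` for every `w`. -/
theorem stmt7 (d ng np : ℕ)
    (ψ : Fin ng → (Fin d → ℝ) → ℝ) (hψ : ∀ k, ContDiff ℝ 1 (ψ k))
    (M : Matrix (Fin ng) (Fin ng) ℝ) (hM : M.IsSymm) (hMinv : IsUnit M.det)
    (P Q : Fin np → Fin d → ℝ) (m : Fin ng → Fin d → ℝ)
    (hm : ∀ k, ∑ l, M k l • m l = ∑ β, ψ k (Q β) • P β)
    (u : Fin ng → Fin d → ℝ)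
    (adu : (Fin ng → Fin d → ℝ) → Fin np → Fin d → ℝ)
    (hadu : ∀ w β, adu w β = ∑ k, ∑ l, ψ k (Q β) •
      (dot (u k) (grad (ψ l) (Q β)) • w l - dot (w k) (grad (ψ l) (Q β)) • u l))
    (adstar : Fin ng → Fin d → ℝ)
    (hadstar : ∀ k, adstar k = ∑ n, M⁻¹ k n •
      (∑ l, ∑ β, (dot (P β) (u l) * ψ n (Q β)) • grad (ψ l) (Q β)
        - ∑ β, dot (grad (ψ n) (Q β)) (∑ j, ψ j (Q β) • u j) • P β)) :
    ∀ w : Fin ng → Fin d → ℝ,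
      ∑ k, ∑ l, M k l * dot (adstar k) (w l) = -∑ β, dot (P β) (adu w β) := by
  intro w
  set A : Fin ng → Fin d → ℝ := fun n =>
    ∑ l, ∑ β, (dot (P β) (u l) * ψ n (Q β)) • grad (ψ l) (Q β)
      - ∑ β, dot (grad (ψ n) (Q β)) (∑ j, ψ j (Q β) • u j) • P β with hAdef
  have hA : ∀ k l, dot (adstar k) (w l) = ∑ n, M⁻¹ k n * dot (A n) (w l) := by
    intro k l
    rw [hadstar k, dot_sum_left]
    exact Finset.sum_congr rfl fun n _ => dot_smul_left _ _ _
  have hMM : ∀ l n, ∑ k, M l k * M⁻¹ k n = if l = n then (1:ℝ) else 0 := by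
    intro l n
    have := Matrix.mul_nonsing_inv M hMinv
    have h2 : (M * M⁻¹) l n = (1 : Matrix (Fin ng) (Fin ng) ℝ) l n := by rw [this]
    simpa [Matrix.mul_apply, Matrix.one_apply] using h2
  have key : ∑ k, ∑ l, M k l * dot (adstar k) (w l) = ∑ l, dot (A l) (w l) := by
    calc ∑ k, ∑ l, M k l * dot (adstar k) (w l)
        = ∑ l, ∑ n, (∑ k, M l k * M⁻¹ k n) * dot (A n) (w l) := by
          rw [Finset.sum_comm]
          refine Finset.sum_congr rfl fun l _ => ?_
          simp only [hA, Finset.mul_sum, Finset.sum_mul]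
          rw [Finset.sum_comm]
          refine Finset.sum_congr rfl fun n _ => Finset.sum_congr rfl fun k _ => ?_
          rw [hM.apply l k, mul_assoc]
      _ = ∑ l, dot (A l) (w l) := by
          refine Finset.sum_congr rfl fun l _ => ?_
          rw [Finset.sum_congr rfl fun n _ => by rw [hMM l n]]
          simp
  rw [key]
  simp only [hAdef, hadu, dot_sub_left, dot_sum_left, dot_smul_left, dot_sub_right,
    dot_sum_right, dot_smul_right]
  rw [Finset.sum_sub_distrib]
  have hL1 : (∑ l, ∑ k, ∑ β, dot (P β) (u k) * ψ l (Q β) * dot (grad (ψ k) (Q β)) (w l))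
      = ∑ β, ∑ k, ∑ l, ψ k (Q β) * (dot (w k) (grad (ψ l) (Q β)) * dot (P β) (u l)) := by
    calc (∑ l, ∑ k, ∑ β, dot (P β) (u k) * ψ l (Q β) * dot (grad (ψ k) (Q β)) (w l))
        = ∑ l, ∑ β, ∑ k, dot (P β) (u k) * ψ l (Q β) * dot (grad (ψ k) (Q β)) (w l) :=
          Finset.sum_congr rfl fun l _ => Finset.sum_comm
      _ = ∑ β, ∑ l, ∑ k, dot (P β) (u k) * ψ l (Q β) * dot (grad (ψ k) (Q β)) (w l) :=
          Finset.sum_comm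
      _ = ∑ β, ∑ k, ∑ l, ψ k (Q β) * (dot (w k) (grad (ψ l) (Q β)) * dot (P β) (u l)) := by
          refine Finset.sum_congr rfl fun β _ => Finset.sum_congr rfl fun k _ =>
            Finset.sum_congr rfl fun l _ => ?_
          rw [dot_comm (w k)]
          ring
  have hL2 : (∑ l, ∑ β, (∑ j, ψ j (Q β) * dot (grad (ψ l) (Q β)) (u j)) * dot (P β) (w l))
      = ∑ β, ∑ k, ∑ l, ψ k (Q β) * (dot (u k) (grad (ψ l) (Q β)) * dot (P β) (w l)) := by
    simp only [Finset.sum_mul]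
    rw [Finset.sum_comm]
    refine Finset.sum_congr rfl fun β _ => ?_
    rw [Finset.sum_comm]
    refine Finset.sum_congr rfl fun k _ => Finset.sum_congr rfl fun l _ => ?_
    rw [dot_comm (u k)]
    ring
  rw [hL1, hL2]
  simp only [mul_sub, Finset.sum_sub_distrib, neg_sub]
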